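/- Any hierarchic BS(LRA) model of the five clauses Nat(0); (y = x+1 → (Nat(x) → Nat(y))); (x < 0 → ¬Nat(x)); (0 < x < 1 → ¬Nat(x)); (x > 0 ∧ y = x+1 → (Nat(y) → Nat(x))) interprets Nat as exactly the set of natural numbers: Nat^A = {q ∈ ℚ | ∃n ∈ ℕ, q = n}. -/
import Mathlib

/-- Any hierarchic BS(LRA) model of the five clauses `Nat(0)`;
`y = x+1 → (Nat(x) → Nat(y))`; `x < 0 → ¬Nat(x)`; `0 < x < 1 → ¬Nat(x)`;
`x > 0 ∧ y = x+1 → (Nat(y) → Nat(x))` interprets `Nat` as exactly the set of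
natural numbers. -/
theorem nat_exact (NatA : Set ℚ)
    (h0 : (0 : ℚ) ∈ NatA)
    (hs : ∀ q : ℚ, q ∈ NatA → q + 1 ∈ NatA)
    (hneg : ∀ q : ℚ, q < 0 → q ∉ NatA)
    (hfrac : ∀ q : ℚ, 0 < q → q < 1 → q ∉ NatA)
    (hdown : ∀ q : ℚ, 0 < q → q + 1 ∈ NatA → q ∈ NatA) :
    NatA = {q : ℚ | ∃ n : ℕ, q = (n : ℚ)} := by
  have key : ∀ n : ℕ, ∀ q : ℚ, q ∈ NatA → q ≤ n → ∃ m : ℕ, q = (m : ℚ) := by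
    intro n
    induction n with
    | zero =>
      intro q hq hle
      have : ¬ q < 0 := fun h => hneg q h hq
      push_neg at this
      exact ⟨0, by push_cast at hle ⊢; linarith⟩
    | succ n ih =>
      intro q hq hle
      by_cases h : q ≤ n
      · exact ih q hq h
      · push_neg at h
        have hq0 : 0 < q := lt_of_le_of_lt (Nat.cast_nonneg n) h
        by_cases h1 : 0 < q - 1
        · have hq1 : q - 1 ∈ NatA := hdown (q - 1) h1 (by simpa using hq)
          have hle1 : q - 1 ≤ n := by push_cast at hle ⊢; linarith
          obtain ⟨m, hm⟩ := ih (q - 1) hq1 hle1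
          exact ⟨m + 1, by push_cast; linarith⟩
        · push_neg at h1
          have : ¬ q < 1 := fun hlt => hfrac q hq0 hlt hq
          exact ⟨1, by push_cast; linarith⟩
  ext q
  constructor
  · intro hq
    have : ¬ q < 0 := fun h => hneg q h hq
    obtain ⟨n, hn⟩ := exists_nat_ge q
    exact key n q hq hn
  · rintro ⟨n, rfl⟩
    induction n with
    | zero => simpa using h0
    | succ n ih => push_cast; exact hs _ ih
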